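/- arXiv:1510.05334 — 4 statements merged into one kernel-verified Lean document; each statement's English description precedes it below -/
import Mathlib

section
/- For every function f: F^n → F over a finite prime field F with bias(f) = δ, there exists a set A ⊆ F^n with |A| ≥ (δ²/2)·|F|^n such that for every y ∈ A, the derivative D_y f(x) = f(x+y) - f(x) satisfies bias(D_y f) ≥ δ²/2. -/
open Finset

/-- The bias of a function `f : F^n → F`, `F = Z/q`:
`bias(f) = |E_{x}[ω^{f(x)}]|` with `ω = e^{2πi/q}`. -/
noncomputable def bias {q n : ℕ} [NeZero q] (f : (Fin n → ZMod q) → ZMod q) : ℝ :=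
  ‖∑ x : Fin n → ZMod q,
    Complex.exp (2 * Real.pi * Complex.I * ((f x).val : ℂ) / (q : ℂ))‖ / (q : ℝ) ^ n

noncomputable def ee {q : ℕ} (a : ZMod q) : ℂ :=
  Complex.exp (2 * Real.pi * Complex.I * ((a.val : ℕ) : ℂ) / (q : ℂ))

lemma ee_eq {q : ℕ} (a : ZMod q) :
    ee a = Complex.exp (((2 * Real.pi * a.val / q : ℝ) : ℂ) * Complex.I) := by
  unfold ee; push_cast; ring_nf

lemma ee_abs {q : ℕ} (a : ZMod q) : ‖ee a‖ = 1 := by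
  rw [ee_eq, Complex.norm_exp_ofReal_mul_I]

lemma ee_ne_zero {q : ℕ} (a : ZMod q) : ee a ≠ 0 := by
  unfold ee; exact Complex.exp_ne_zero _

lemma ee_add {q : ℕ} [NeZero q] (a b : ZMod q) : ee (a + b) = ee a * ee b := by
  have hq : (q : ℂ) ≠ 0 := Nat.cast_ne_zero.mpr (NeZero.ne q)
  set k := (a.val + b.val) / q with hk
  have hv : a.val + b.val = (a + b).val + q * k := by
    rw [ZMod.val_add]; exact (Nat.mod_add_div _ _).symm
  have hv' : (a.val : ℂ) + b.val = ((a + b).val : ℂ) + q * k := by exact_mod_cast hv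
  rw [ee_eq, ee_eq, ee_eq, ← Complex.exp_add]
  have key : ((2 * Real.pi * ((a+b).val : ℝ) / q : ℝ) : ℂ) * Complex.I
      = ((2 * Real.pi * (a.val : ℝ) / q : ℝ) : ℂ) * Complex.I
        + ((2 * Real.pi * (b.val : ℝ) / q : ℝ) : ℂ) * Complex.I
        - (k : ℂ) * (2 * Real.pi * Complex.I) := by
    have hk' : (k : ℂ) = ((a.val : ℂ) + (b.val : ℂ) - (((a+b).val : ℕ) : ℂ)) / q := by
      rw [eq_div_iff hq]; linear_combination -hv'
    simp only [Complex.ofReal_div, Complex.ofReal_mul, Complex.ofReal_ofNat,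
      Complex.ofReal_natCast]
    rw [hk']
    ring
  rw [key, sub_eq_add_neg, Complex.exp_add, Complex.exp_neg,
    Complex.exp_nat_mul_two_pi_mul_I, inv_one, mul_one]

lemma ee_mul_conj {q : ℕ} [NeZero q] (a b : ZMod q) :
    ee a * (starRingEnd ℂ) (ee b) = ee (a - b) := by
  have hconj : (starRingEnd ℂ) (ee b) = (ee b)⁻¹ :=
    ((Complex.inv_eq_conj (ee_abs b)).symm)
  have h := ee_add (a - b) b
  rw [sub_add_cancel] at h
  rw [hconj, h, mul_inv_cancel_right₀ (ee_ne_zero b)]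

lemma bias_eq {q n : ℕ} [NeZero q] (f : (Fin n → ZMod q) → ZMod q) :
    bias f = ‖∑ x : Fin n → ZMod q, ee (f x)‖ / (q : ℝ) ^ n := rfl

lemma bias_nonneg {q n : ℕ} [NeZero q] (f : (Fin n → ZMod q) → ZMod q) : 0 ≤ bias f := by
  unfold bias; positivity

theorem stmt0 {q n : ℕ} [Fact (Nat.Prime q)] (f : (Fin n → ZMod q) → ZMod q) (δ : ℝ)
    (hδ : bias f = δ) :
    ∃ A : Finset (Fin n → ZMod q),
      (δ ^ 2 / 2) * (q : ℝ) ^ n ≤ (A.card : ℝ) ∧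
      ∀ y ∈ A, δ ^ 2 / 2 ≤ bias (fun x => f (x + y) - f x) := by
  classical
  subst hδ
  set N : ℝ := (q : ℝ) ^ n with hN
  have hq1 : 1 < q := (Fact.out : Nat.Prime q).one_lt
  have hNpos : (0 : ℝ) < N := by positivity
  have hcard : (Fintype.card (Fin n → ZMod q) : ℝ) = N := by
    rw [Fintype.card_fun, ZMod.card, Fintype.card_fin]; push_cast; rfl
  set S : ((Fin n → ZMod q) → ZMod q) → ℂ := fun g => ∑ x, ee (g x) with hS
  -- each partial exponential sum is at most N in absolute value
  have hSle : ∀ g : (Fin n → ZMod q) → ZMod q, ‖S g‖ ≤ N := by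
    intro g
    calc ‖S g‖ ≤ ∑ x : Fin n → ZMod q, ‖ee (g x)‖ :=
          norm_sum_le _ _
      _ = ∑ _x : Fin n → ZMod q, (1 : ℝ) := by simp [ee_abs]
      _ = N := by rw [Finset.sum_const, Finset.card_univ, nsmul_eq_mul, mul_one, hcard]
  -- key identity / inequality
  have hkey : (‖S f‖) ^ 2
      ≤ ∑ y : Fin n → ZMod q, ‖S (fun x => f (x + y) - f x)‖ := by
    have h1 : S f * (starRingEnd ℂ) (S f)
        = ∑ y : Fin n → ZMod q, S (fun x => f (x + y) - f x) := by
      rw [hS, map_sum, Finset.sum_mul_sum]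
      simp only [ee_mul_conj]
      rw [Finset.sum_comm]
      have hre : ∀ x' : Fin n → ZMod q,
          ∑ x : Fin n → ZMod q, ee (f x - f x')
            = ∑ y : Fin n → ZMod q, ee (f (x' + y) - f x') := fun x' =>
        (Fintype.sum_equiv (Equiv.addLeft x') (fun y => ee (f (x' + y) - f x'))
          (fun x => ee (f x - f x')) (fun y => rfl)).symm
      simp only [hre]
      rw [Finset.sum_comm]
    have h2 : (‖S f‖) ^ 2 = (S f * (starRingEnd ℂ) (S f)).re := by
      rw [Complex.mul_conj, Complex.sq_norm]; simp
    rw [h2, h1, Complex.re_sum]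
    exact Finset.sum_le_sum fun y _ => Complex.re_le_norm _
  set δ := bias f with hδ
  have hδ0 : 0 ≤ δ := bias_nonneg f
  have hSf : ‖S f‖ = δ * N := by
    rw [hδ, bias_eq]; field_simp; rfl
  refine ⟨Finset.univ.filter (fun y => δ ^ 2 / 2 ≤ bias (fun x => f (x + y) - f x)), ?_, ?_⟩
  · -- cardinality bound
    set A := Finset.univ.filter
      (fun y => δ ^ 2 / 2 ≤ bias (fun x => f (x + y) - f x)) with hA
    have hsum_le : ∑ y : Fin n → ZMod q, ‖S (fun x => f (x + y) - f x)‖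
        ≤ (A.card : ℝ) * N + N * (δ ^ 2 / 2 * N) := by
      rw [← Finset.sum_filter_add_sum_filter_not Finset.univ
        (fun y => δ ^ 2 / 2 ≤ bias (fun x => f (x + y) - f x))]
      gcongr ?_ + ?_
      · calc ∑ y ∈ A, ‖S (fun x => f (x + y) - f x)‖
            ≤ ∑ _y ∈ A, N := Finset.sum_le_sum fun y _ => hSle _
          _ = (A.card : ℝ) * N := by rw [Finset.sum_const, nsmul_eq_mul]
      · calc ∑ y ∈ Finset.univ.filter
              (fun y => ¬ δ ^ 2 / 2 ≤ bias (fun x => f (x + y) - f x)),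
              ‖S (fun x => f (x + y) - f x)‖
            ≤ ∑ _y ∈ Finset.univ.filter
              (fun y => ¬ δ ^ 2 / 2 ≤ bias (fun x => f (x + y) - f x)), (δ ^ 2 / 2 * N) := by
              refine Finset.sum_le_sum fun y hy => ?_
              rw [Finset.mem_filter] at hy
              have hb : bias (fun x => f (x + y) - f x) ≤ δ ^ 2 / 2 := le_of_not_ge hy.2
              rw [bias_eq] at hb
              exact (div_le_iff₀ hNpos).mp hb
          _ ≤ ∑ _y : Fin n → ZMod q, (δ ^ 2 / 2 * N) := by
              refine Finset.sum_le_sum_of_subset_of_nonneg (Finset.filter_subset _ _)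
                fun y _ _ => by positivity
          _ = N * (δ ^ 2 / 2 * N) := by
              rw [Finset.sum_const, Finset.card_univ, nsmul_eq_mul, hcard]
    have hmain : δ ^ 2 * N ^ 2 ≤ (A.card : ℝ) * N + δ ^ 2 / 2 * N ^ 2 := by
      have := hkey.trans hsum_le
      rw [hSf, mul_pow] at this
      nlinarith [this]
    nlinarith [hmain, hNpos]
  · intro y hy
    exact (Finset.mem_filter.mp hy).2
end

section
/- If f: F^n → F is a degree-d polynomial and V ⊆ F^n is an affine subspace of dimension n - t, then strong-rank(f) ≤ strong-rank(f|_V) + t. -/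
open Finset MvPolynomial

section AuxLemmas

variable {R : Type*} [CommRing R]

lemma aux_prod_pow_deg {σ τ : Type*} (u : σ → MvPolynomial τ R)
    (hu : ∀ i, (u i).totalDegree ≤ 1) (a : σ →₀ ℕ) :
    (a.prod fun i k => u i ^ k).totalDegree ≤ a.sum fun _ k => k := by
  rw [Finsupp.prod]
  refine (MvPolynomial.totalDegree_finset_prod _ _).trans ?_
  rw [Finsupp.sum]
  refine Finset.sum_le_sum fun i _ => ?_
  calc (u i ^ a i).totalDegree ≤ a i * (u i).totalDegree := totalDegree_pow _ _
    _ ≤ a i * 1 := Nat.mul_le_mul_left _ (hu i)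
    _ = a i := mul_one _

lemma aux_bind₁_deg_le {n m : ℕ} (φ : Fin m → MvPolynomial (Fin n) R)
    (hφ : ∀ i, (φ i).totalDegree ≤ 1) (p : MvPolynomial (Fin m) R) :
    (bind₁ φ p).totalDegree ≤ p.totalDegree := by
  conv_lhs => rw [← support_sum_monomial_coeff p, map_sum]
  refine (totalDegree_finset_sum _ _).trans (Finset.sup_le fun a ha => ?_)
  rw [bind₁, aeval_monomial]
  refine (totalDegree_mul _ _).trans ?_
  have h1 : (algebraMap R (MvPolynomial (Fin n) R) (coeff a p)).totalDegree = 0 := by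
    simp [MvPolynomial.algebraMap_eq]
  rw [h1, zero_add]
  exact (aux_prod_pow_deg φ hφ a).trans (le_totalDegree ha)

lemma aux_cofactor {n : ℕ} {τ : Type*} (u v : Fin n → MvPolynomial τ R)
    (hu : ∀ i, (u i).totalDegree ≤ 1) (hv : ∀ i, (v i).totalDegree ≤ 1) (a : Fin n →₀ ℕ) :
    ∃ W : Fin n → MvPolynomial τ R,
      (∀ i, W i = 0 ∨ (W i).totalDegree + 1 ≤ a.sum fun _ k => k) ∧
      (a.prod fun i k => u i ^ k) - (a.prod fun i k => v i ^ k) = ∑ i, (u i - v i) * W i := by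
  induction a using Finsupp.induction with
  | zero => exact ⟨0, fun i => Or.inl rfl, by simp⟩
  | single_add i b a0 hia hb ih =>
    obtain ⟨W0, hW0deg, hW0⟩ := ih
    have hprod : ∀ w : Fin n → MvPolynomial τ R,
        ((Finsupp.single i b + a0).prod fun j k => w j ^ k)
          = w i ^ b * (a0.prod fun j k => w j ^ k) := by
      intro w
      rw [Finsupp.prod_add_index (by simp) (fun j _ k1 k2 => pow_add _ _ _),
        Finsupp.prod_single_index (by simp)]
    have hsum : ((Finsupp.single i b + a0).sum fun _ k => k)
        = b + a0.sum fun _ k => k := by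
      rw [Finsupp.sum_add_index (by simp) (fun j _ k1 k2 => rfl),
        Finsupp.sum_single_index rfl]
    set g : MvPolynomial τ R := ∑ s ∈ range b, u i ^ s * v i ^ (b - 1 - s) with hg
    have hgdeg : g.totalDegree ≤ b - 1 := by
      refine (totalDegree_finset_sum _ _).trans (Finset.sup_le fun s hs => ?_)
      have hs' : s ≤ b - 1 := Nat.le_sub_one_of_lt (Finset.mem_range.mp hs)
      calc (u i ^ s * v i ^ (b - 1 - s)).totalDegree
          ≤ (u i ^ s).totalDegree + (v i ^ (b - 1 - s)).totalDegree := totalDegree_mul _ _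
        _ ≤ s * 1 + (b - 1 - s) * 1 := by
            gcongr
            · exact (totalDegree_pow _ _).trans (Nat.mul_le_mul_left _ (hu i))
            · exact (totalDegree_pow _ _).trans (Nat.mul_le_mul_left _ (hv i))
        _ ≤ b - 1 := by omega
    set Pu := a0.prod fun j k => u j ^ k with hPu
    set Pv := a0.prod fun j k => v j ^ k with hPv
    have hPudeg : Pu.totalDegree ≤ a0.sum fun _ k => k := aux_prod_pow_deg u hu a0
    have hb1 : 1 ≤ b := Nat.one_le_iff_ne_zero.mpr hb
    have hvb : (v i ^ b).totalDegree ≤ b :=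
      (totalDegree_pow _ _).trans (by
        calc b * (v i).totalDegree ≤ b * 1 := Nat.mul_le_mul_left _ (hv i)
          _ = b := mul_one _)
    refine ⟨fun j => (if j = i then g * Pu else 0) + v i ^ b * W0 j, ?_, ?_⟩
    · intro j
      right
      simp only []
      rw [hsum]
      have h1 : ((if j = i then g * Pu else 0) : MvPolynomial τ R).totalDegree
          ≤ (b - 1) + a0.sum fun _ k => k := by
        split
        · exact (totalDegree_mul _ _).trans (add_le_add hgdeg hPudeg)
        · simp
      rcases hW0deg j with h2 | h2
      · rw [h2, mul_zero, add_zero]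
        omega
      · have h3 : (v i ^ b * W0 j).totalDegree ≤ b + (W0 j).totalDegree :=
          (totalDegree_mul _ _).trans (add_le_add_left hvb _)
        have h4 : _ ≤ max _ _ := totalDegree_add ((if j = i then g * Pu else 0)) (v i ^ b * W0 j)
        omega
    · rw [hprod u, hprod v, ← hPu, ← hPv]
      have hgeom : g * (u i - v i) = u i ^ b - v i ^ b := geom_sum₂_mul (u i) (v i) b
      have key : u i ^ b * Pu - v i ^ b * Pv
          = (u i - v i) * (g * Pu) + v i ^ b * (Pu - Pv) := by
        have h5 : (u i - v i) * (g * Pu) = (u i ^ b - v i ^ b) * Pu := by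
          rw [← hgeom]; ring
        rw [h5]; ring
      rw [key, hW0]
      rw [Finset.mul_sum]
      have hsplit : ∑ j, (u j - v j) * ((if j = i then g * Pu else 0) + v i ^ b * W0 j)
          = (∑ j, if j = i then (u j - v j) * (g * Pu) else 0)
            + ∑ j, v i ^ b * ((u j - v j) * W0 j) := by
        rw [← Finset.sum_add_distrib]
        refine Finset.sum_congr rfl fun j _ => ?_
        rw [mul_add]
        congr 1
        · split <;> simp
        · ring
      rw [hsplit, Finset.sum_ite_eq' Finset.univ i (fun j => (u j - v j) * (g * Pu))]
      simp

lemma aux_diff_decomp [Nontrivial R] {n d : ℕ} (π : Fin n → MvPolynomial (Fin n) R)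
    (hπ : ∀ i, (π i).totalDegree ≤ 1) (p : MvPolynomial (Fin n) R)
    (hp : p.totalDegree ≤ d) :
    ∃ D : Fin n → MvPolynomial (Fin n) R,
      (∀ i, (D i).totalDegree ≤ d - 1) ∧
      p - bind₁ π p = ∑ i, (X i - π i) * D i := by
  have hX : ∀ i : Fin n, ((X i : MvPolynomial (Fin n) R)).totalDegree ≤ 1 :=
    fun i => le_of_eq (totalDegree_X i)
  choose W hWdeg hWeq using aux_cofactor X π hX hπ
  refine ⟨fun i => ∑ a ∈ p.support, C (coeff a p) * W a i, ?_, ?_⟩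
  · intro i
    refine (totalDegree_finset_sum _ _).trans (Finset.sup_le fun a ha => ?_)
    refine (totalDegree_mul _ _).trans ?_
    rw [totalDegree_C, zero_add]
    rcases hWdeg a i with h | h
    · simp [h]
    · have := (le_totalDegree ha).trans hp
      omega
  · conv_lhs => rw [← support_sum_monomial_coeff p, map_sum]
    rw [← Finset.sum_sub_distrib]
    have step : ∀ a ∈ p.support,
        monomial a (coeff a p) - bind₁ π (monomial a (coeff a p))
          = ∑ i, (X i - π i) * (C (coeff a p) * W a i) := by
      intro a _
      rw [bind₁, aeval_monomial, MvPolynomial.algebraMap_eq, monomial_eq, ← mul_sub, hWeq a,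
        Finset.mul_sum]
      refine Finset.sum_congr rfl fun i _ => by ring
    rw [Finset.sum_congr rfl step, Finset.sum_comm]
    refine Finset.sum_congr rfl fun i _ => ?_
    rw [Finset.mul_sum]

lemma aux_collect {σ : Type*} {p r : ℕ} (a : Fin p → R) (b : Fin p → Fin r → R)
    (P : Fin r → MvPolynomial σ R) :
    ∑ j, C (a j) * ∑ k, C (b j k) * P k = ∑ k, C (∑ j, a j * b j k) * P k := by
  simp_rw [Finset.mul_sum, ← mul_assoc, ← map_mul]
  rw [Finset.sum_comm]
  simp_rw [← Finset.sum_mul, ← map_sum]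

end AuxLemmas

/-- `P` has a strong decomposition with `r` terms with respect to degree `d`. -/
def HasStrongDecomp {q n : ℕ} (d r : ℕ) (P : MvPolynomial (Fin n) (ZMod q)) : Prop :=
  ∃ (G H : Fin r → MvPolynomial (Fin n) (ZMod q)) (Q : MvPolynomial (Fin n) (ZMod q)),
    (∀ i, 0 < (G i).totalDegree) ∧ (∀ i, 0 < (H i).totalDegree) ∧
    (∀ i, (G i).totalDegree + (H i).totalDegree ≤ d) ∧
    Q.totalDegree ≤ d - 1 ∧
    P = ∑ i, G i * H i + Q

/-- The strong rank of a polynomial with respect to degree `d`. -/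
noncomputable def strongRankD {q n : ℕ} (d : ℕ) (P : MvPolynomial (Fin n) (ZMod q)) : ℕ :=
  sInf {r | HasStrongDecomp d r P}

lemma aux_rank_le {q n : ℕ} (d k : ℕ) (P : MvPolynomial (Fin n) (ZMod q))
    (u v : Fin k → MvPolynomial (Fin n) (ZMod q)) (Q0 : MvPolynomial (Fin n) (ZMod q))
    (huv : ∀ l, (u l).totalDegree + (v l).totalDegree ≤ d)
    (hu0 : ∀ l, (u l).totalDegree = 0 → (v l).totalDegree ≤ d - 1)
    (hv0 : ∀ l, (v l).totalDegree = 0 → (u l).totalDegree ≤ d - 1)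
    (hQ : Q0.totalDegree ≤ d - 1)
    (hP : P = ∑ l, u l * v l + Q0) :
    ∃ s ≤ k, HasStrongDecomp d s P := by
  classical
  set good : Fin k → Prop := fun l => 0 < (u l).totalDegree ∧ 0 < (v l).totalDegree with hgood
  set T : Finset (Fin k) := Finset.univ.filter good with hT
  refine ⟨T.card, le_trans (Finset.card_filter_le _ _) (by simp), ?_⟩
  set e : Fin T.card ≃ {x // x ∈ T} := T.equivFin.symm with he
  refine ⟨fun i => u (e i), fun i => v (e i),
    Q0 + ∑ l ∈ Finset.univ.filter (fun l => ¬ good l), u l * v l, ?_, ?_, ?_, ?_, ?_⟩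
  · intro i
    simpa using (Finset.mem_filter.mp (e i).2).2.1
  · intro i
    simpa using (Finset.mem_filter.mp (e i).2).2.2
  · intro i; exact huv _
  · refine (totalDegree_add _ _).trans (max_le hQ ?_)
    refine (totalDegree_finset_sum _ _).trans (Finset.sup_le fun l hl => ?_)
    have hl' : ¬ good l := (Finset.mem_filter.mp hl).2
    rw [hgood] at hl'
    refine (totalDegree_mul _ _).trans ?_
    rcases Nat.eq_zero_or_pos (u l).totalDegree with h | h
    · have := hu0 l h; omega
    · have h2 : (v l).totalDegree = 0 := by
        by_contra h3
        exact hl' ⟨h, Nat.pos_of_ne_zero h3⟩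
      have := hv0 l h2; omega
  · rw [hP]
    have h1 : ∑ i : Fin T.card, u (e i) * v (e i) = ∑ l ∈ T, u l * v l := by
      rw [← Finset.sum_coe_sort T (fun l => u l * v l)]
      exact Fintype.sum_equiv e _ _ fun i => rfl
    rw [h1, ← Finset.sum_filter_add_sum_filter_not Finset.univ good (fun l => u l * v l)]
    ring

lemma aux_rank_zero_of_d_le_one {q n : ℕ} {d : ℕ} (hd : d ≤ 1)
    (f : MvPolynomial (Fin n) (ZMod q)) : strongRankD d f = 0 := by
  rw [strongRankD, Nat.sInf_eq_zero]
  by_cases h : {r | HasStrongDecomp d r f}.Nonempty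
  · left
    obtain ⟨r, hr⟩ := h
    rcases Nat.eq_zero_or_pos r with hr0 | hr0
    · rwa [← hr0]
    · exfalso
      obtain ⟨G, H, Q, hG, hH, hGH, _, _⟩ := hr
      have := hG ⟨0, hr0⟩
      have := hH ⟨0, hr0⟩
      have := hGH ⟨0, hr0⟩
      omega
  · right
    exact Set.not_nonempty_iff_eq_empty.mp h

lemma aux_linalg {q n m : ℕ} [Fact (Nat.Prime q)] (M : Matrix (Fin n) (Fin m) (ZMod q))
    (hT : Function.Injective M.mulVecLin) :
    ∃ (N : Matrix (Fin m) (Fin n) (ZMod q)) (S : Matrix (Fin n) (Fin (n - m)) (ZMod q))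
      (Z : Matrix (Fin (n - m)) (Fin n) (ZMod q)),
      N * M = 1 ∧ M * N + S * Z = 1 := by
  set T : (Fin m → ZMod q) →ₗ[ZMod q] (Fin n → ZMod q) := M.mulVecLin with hTdef
  set Rng := LinearMap.range T with hRng
  obtain ⟨W, hcompl⟩ := Submodule.exists_isCompl Rng
  have h1 : Module.finrank (ZMod q) Rng = m := by
    rw [hRng, LinearMap.finrank_range_of_inj hT, Module.finrank_fin_fun]
  have h2 := Submodule.finrank_add_eq_of_isCompl hcompl
  have h3 : Module.finrank (ZMod q) (Fin n → ZMod q) = n := Module.finrank_fin_fun _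
  have hm' : m ≤ n := by
    have := Submodule.finrank_le Rng
    omega
  have hW : Module.finrank (ZMod q) W = n - m := by omega
  set bW := Module.finBasisOfFinrankEq (ZMod q) W hW with hbW
  set Smap : (Fin (n - m) → ZMod q) →ₗ[ZMod q] (Fin n → ZMod q) :=
    W.subtype ∘ₗ (bW.equivFun.symm : (Fin (n - m) → ZMod q) ≃ₗ[ZMod q] W).toLinearMap with hSmap
  set E : ((Fin m → ZMod q) × (Fin (n - m) → ZMod q)) ≃ₗ[ZMod q] (Fin n → ZMod q) :=
    ((LinearEquiv.ofInjective T hT).prodCongr bW.equivFun.symm).trans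
      (Submodule.prodEquivOfIsCompl Rng W hcompl) with hE
  have hEapp : ∀ uz : (Fin m → ZMod q) × (Fin (n - m) → ZMod q), E uz = T uz.1 + Smap uz.2 := by
    intro uz
    rw [hE]
    simp only [LinearEquiv.trans_apply, LinearEquiv.prodCongr_apply,
      Submodule.coe_prodEquivOfIsCompl', LinearEquiv.ofInjective_apply, hSmap]
    rfl
  set Nlin : (Fin n → ZMod q) →ₗ[ZMod q] (Fin m → ZMod q) :=
    LinearMap.fst (ZMod q) _ _ ∘ₗ (E.symm : (Fin n → ZMod q) ≃ₗ[ZMod q] _).toLinearMap with hNlin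
  set Zlin : (Fin n → ZMod q) →ₗ[ZMod q] (Fin (n - m) → ZMod q) :=
    LinearMap.snd (ZMod q) _ _ ∘ₗ (E.symm : (Fin n → ZMod q) ≃ₗ[ZMod q] _).toLinearMap with hZlin
  have hNT : Nlin ∘ₗ T = LinearMap.id := by
    apply LinearMap.ext
    intro u
    have : E (u, 0) = T u := by rw [hEapp]; simp
    simp only [hNlin, LinearMap.comp_apply, LinearEquiv.coe_coe, LinearMap.id_apply,
      LinearMap.fst_apply]
    rw [← this, E.symm_apply_apply]
  have hTNSZ : T ∘ₗ Nlin + Smap ∘ₗ Zlin = LinearMap.id := by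
    apply LinearMap.ext
    intro x
    have h4 : E (E.symm x) = x := E.apply_symm_apply x
    rw [hEapp] at h4
    simpa [hNlin, hZlin] using h4
  refine ⟨LinearMap.toMatrix' Nlin, LinearMap.toMatrix' Smap, LinearMap.toMatrix' Zlin, ?_, ?_⟩
  · have hM : LinearMap.toMatrix' T = M := by
      rw [hTdef, ← Matrix.toLin'_apply', LinearMap.toMatrix'_toLin']
    rw [← hM, ← LinearMap.toMatrix'_comp, hNT, LinearMap.toMatrix'_id]
  · have hM : LinearMap.toMatrix' T = M := by
      rw [hTdef, ← Matrix.toLin'_apply', LinearMap.toMatrix'_toLin']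
    rw [← hM, ← LinearMap.toMatrix'_comp, ← LinearMap.toMatrix'_comp, ← map_add,
      hTNSZ, LinearMap.toMatrix'_id]

/-- If `V` is an affine subspace of dimension `m = n - t`, parametrized by an injective
affine map `u ↦ c + M u`, then `strong-rank(f) ≤ strong-rank(f|_V) + t`. -/
theorem stmt5 {q n m : ℕ} [Fact (Nat.Prime q)] (hm : m ≤ n) (d : ℕ)
    (f : MvPolynomial (Fin n) (ZMod q)) (hdeg : f.totalDegree ≤ d)
    (M : Matrix (Fin n) (Fin m) (ZMod q)) (c : Fin n → ZMod q)
    (hinj : Function.Injective fun (u : Fin m → ZMod q) =>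
      fun i : Fin n => c i + ∑ j, M i j * u j) :
    strongRankD d f ≤
      strongRankD d (MvPolynomial.bind₁
        (fun i => MvPolynomial.C (c i) + ∑ j, MvPolynomial.C (M i j) * MvPolynomial.X j) f)
      + (n - m) := by
  classical
  rcases le_or_gt d 1 with hd1 | hd1
  · rw [aux_rank_zero_of_d_le_one hd1 f]
    exact Nat.zero_le _
  -- now 2 ≤ d
  have hd2 : 2 ≤ d := hd1
  set φ : Fin n → MvPolynomial (Fin m) (ZMod q) :=
    fun i => C (c i) + ∑ j, C (M i j) * X j with hφdef
  set g : MvPolynomial (Fin m) (ZMod q) := bind₁ φ f with hgdef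
  have hφ1 : ∀ i, (φ i).totalDegree ≤ 1 := by
    intro i
    refine (totalDegree_add _ _).trans (max_le (by simp) ?_)
    refine (totalDegree_finset_sum _ _).trans (Finset.sup_le fun j _ => ?_)
    refine (totalDegree_mul _ _).trans ?_
    simp [totalDegree_X]
  -- transfer : any strong decomposition of f yields one of g with at most as many terms
  have transfer : ∀ r, HasStrongDecomp d r f → ∃ s ≤ r, HasStrongDecomp d s g := by
    intro r ⟨G, H, Q, hG, hH, hGH, hQ, hfeq⟩
    refine aux_rank_le d r g (fun i => bind₁ φ (G i)) (fun i => bind₁ φ (H i)) (bind₁ φ Q)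
      ?_ ?_ ?_ ?_ ?_
    · intro l
      beta_reduce
      have := aux_bind₁_deg_le φ hφ1 (G l)
      have := aux_bind₁_deg_le φ hφ1 (H l)
      have := hGH l
      omega
    · intro l
      beta_reduce
      intro _
      have := aux_bind₁_deg_le φ hφ1 (H l)
      have := hG l; have := hH l; have := hGH l
      omega
    · intro l
      beta_reduce
      intro _
      have := aux_bind₁_deg_le φ hφ1 (G l)
      have := hG l; have := hH l; have := hGH l
      omega
    · exact (aux_bind₁_deg_le φ hφ1 Q).trans hQ
    · rw [hgdef, hfeq, map_add, map_sum]
      simp only [map_mul]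
  by_cases hne : {r | HasStrongDecomp d r g}.Nonempty
  swap
  · -- the set for g is empty; then the set for f is empty as well
    have hfe : {r | HasStrongDecomp d r f} = ∅ := by
      rw [Set.eq_empty_iff_forall_notMem]
      intro r hr
      obtain ⟨s, _, hs⟩ := transfer r hr
      exact hne ⟨s, hs⟩
    have : strongRankD d f = 0 := by rw [strongRankD, hfe, Nat.sInf_empty]
    rw [this]
    exact Nat.zero_le _
  -- main case
  have hrmem := Nat.sInf_mem hne
  set r : ℕ := sInf {r | HasStrongDecomp d r g} with hrdef
  obtain ⟨G, H, Q, hG, hH, hGH, hQ, hgeq⟩ := hrmem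
  set t : ℕ := n - m with htdef
  -- injectivity of the linear part
  have hTinj : Function.Injective M.mulVecLin := by
    intro u u' huu
    apply hinj
    funext i
    have : M.mulVecLin u i = M.mulVecLin u' i := by rw [huu]
    simpa [Matrix.mulVecLin_apply, Matrix.mulVec, dotProduct] using
      congrArg (fun w => c i + w) this
  obtain ⟨N, S, Z, hNM, hMNSZ⟩ := aux_linalg M hTinj
  have hNMe : ∀ j k, (∑ i, N j i * M i k) = if j = k then (1 : ZMod q) else 0 := by
    intro j k
    have := congrFun (congrFun hNM j) k
    rwa [Matrix.mul_apply, Matrix.one_apply] at this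
  have hIe : ∀ i k, ((∑ j, M i j * N j k) + ∑ l, S i l * Z l k)
      = if i = k then (1 : ZMod q) else 0 := by
    intro i k
    have := congrFun (congrFun hMNSZ i) k
    rwa [Matrix.add_apply, Matrix.mul_apply, Matrix.mul_apply, Matrix.one_apply] at this
  -- polynomial data
  set Xc : Fin n → MvPolynomial (Fin n) (ZMod q) := fun i => X i - C (c i) with hXc
  set ℓ : Fin m → MvPolynomial (Fin n) (ZMod q) := fun j => ∑ i, C (N j i) * Xc i with hℓ
  set zp : Fin t → MvPolynomial (Fin n) (ZMod q) := fun l => ∑ i, C (Z l i) * Xc i with hzp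
  set π : Fin n → MvPolynomial (Fin n) (ZMod q) :=
    fun i => C (c i) + ∑ j, C (M i j) * ℓ j with hπ
  have hXc1 : ∀ i, (Xc i).totalDegree ≤ 1 := by
    intro i
    rw [hXc]
    simp only [sub_eq_add_neg, ← map_neg]
    refine (totalDegree_add _ _).trans (max_le (by simp [totalDegree_X]) (by simp))
  have hlin1 : ∀ {p : ℕ} (w : Fin p → Fin n → ZMod q) (l : Fin p),
      ((∑ i, C (w l i) * Xc i : MvPolynomial (Fin n) (ZMod q))).totalDegree ≤ 1 := by
    intro p w l
    refine (totalDegree_finset_sum _ _).trans (Finset.sup_le fun i _ => ?_)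
    refine (totalDegree_mul _ _).trans ?_
    simpa using hXc1 i
  have hℓ1 : ∀ j, (ℓ j).totalDegree ≤ 1 := fun j => hlin1 N j
  have hz1 : ∀ l, (zp l).totalDegree ≤ 1 := fun l => hlin1 Z l
  have hπ1 : ∀ i, (π i).totalDegree ≤ 1 := by
    intro i
    rw [hπ]
    refine (totalDegree_add _ _).trans (max_le (by simp) ?_)
    refine (totalDegree_finset_sum _ _).trans (Finset.sup_le fun j _ => ?_)
    refine (totalDegree_mul _ _).trans (by simpa using hℓ1 j)
  -- bind₁ φ ∘ bind₁ ℓ = id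
  have hφXc : ∀ i, bind₁ φ (Xc i) = ∑ k, C (M i k) * X k := by
    intro i
    rw [hXc]
    simp only [map_sub, bind₁_X_right, algHom_C, hφdef, MvPolynomial.algebraMap_eq]
    ring
  have hφℓ : ∀ j, bind₁ φ (ℓ j) = X j := by
    intro j
    have step1 : bind₁ φ (ℓ j) = ∑ i, C (N j i) * ∑ k, C (M i k) * X k := by
      rw [hℓ]
      simp only [map_sum, map_mul, algHom_C, hφXc, MvPolynomial.algebraMap_eq]
    rw [step1, aux_collect (fun i => N j i) (fun i k => M i k) X]
    have : ∀ k, C (∑ i, N j i * M i k) * (X k : MvPolynomial (Fin m) (ZMod q))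
        = if j = k then X k else 0 := by
      intro k
      rw [hNMe j k]
      split <;> simp
    rw [Finset.sum_congr rfl fun k _ => this k, Finset.sum_ite_eq]
    simp
  have hcomp : ∀ p : MvPolynomial (Fin m) (ZMod q), bind₁ φ (bind₁ ℓ p) = p := by
    intro p
    rw [bind₁_bind₁]
    simp [hφℓ]
  have hpres : ∀ p : MvPolynomial (Fin m) (ZMod q),
      (bind₁ ℓ p).totalDegree = p.totalDegree := by
    intro p
    refine le_antisymm (aux_bind₁_deg_le ℓ hℓ1 p) ?_
    conv_lhs => rw [← hcomp p]
    exact aux_bind₁_deg_le φ hφ1 _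
  -- Claim 1 : bind₁ ℓ g = bind₁ π f
  have hπeq : (fun i => bind₁ ℓ (φ i)) = π := by
    funext i
    rw [hφdef, hπ]
    simp only [map_add, map_sum, map_mul, algHom_C, bind₁_X_right,
      MvPolynomial.algebraMap_eq]
  have hclaim1 : bind₁ ℓ g = bind₁ π f := by
    rw [hgdef, bind₁_bind₁, hπeq]
  -- Claim 2 : X i - π i = ∑ l, C (S i l) * zp l
  have hclaim2 : ∀ i, X i - π i = ∑ l, C (S i l) * zp l := by
    intro i
    have e1 : X i - π i = Xc i - ∑ j, C (M i j) * ℓ j := by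
      rw [hπ, hXc]; ring
    have e2 : ∑ j, C (M i j) * ℓ j = ∑ k, C (∑ j, M i j * N j k) * Xc k := by
      rw [hℓ]
      exact aux_collect (fun j => M i j) (fun j k => N j k) Xc
    have e3 : ∑ l, C (S i l) * zp l = ∑ k, C (∑ l, S i l * Z l k) * Xc k := by
      rw [hzp]
      exact aux_collect (fun l => S i l) (fun l k => Z l k) Xc
    rw [e1, e2, e3]
    have e4 : Xc i = ∑ k, C (if i = k then (1 : ZMod q) else 0) * Xc k := by
      have : ∀ k, C (if i = k then (1 : ZMod q) else 0) * Xc k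
          = if i = k then Xc k else 0 := by
        intro k; split <;> simp
      rw [Finset.sum_congr rfl fun k _ => this k, Finset.sum_ite_eq]
      simp
    conv_lhs => rw [e4]
    rw [← Finset.sum_sub_distrib]
    refine (Finset.sum_congr rfl fun k _ => ?_).symm
    rw [← hIe i k]
    push_cast [map_add]
    ring
  -- Claim 3 : difference decomposition
  obtain ⟨D, hDdeg, hDeq⟩ := aux_diff_decomp π hπ1 f hdeg
  set Rl : Fin t → MvPolynomial (Fin n) (ZMod q) :=
    fun l => ∑ i, C (S i l) * D i with hRl
  have hRldeg : ∀ l, (Rl l).totalDegree ≤ d - 1 := by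
    intro l
    rw [hRl]
    refine (totalDegree_finset_sum _ _).trans (Finset.sup_le fun i _ => ?_)
    refine (totalDegree_mul _ _).trans (by simpa using hDdeg i)
  have hfsplit : f = bind₁ ℓ g + ∑ l, zp l * Rl l := by
    have e5 : ∑ i, (X i - π i) * D i = ∑ l, zp l * Rl l := by
      rw [Finset.sum_congr rfl fun i (_ : i ∈ Finset.univ) => by
        rw [hclaim2 i, Finset.sum_mul]]
      rw [Finset.sum_comm]
      refine Finset.sum_congr rfl fun l _ => ?_
      rw [hRl, Finset.mul_sum]
      exact Finset.sum_congr rfl fun i _ => by ring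
    have := hDeq
    rw [e5] at this
    rw [hclaim1]
    linear_combination this
  -- assemble the strong decomposition of f
  set uu : Fin (r + t) → MvPolynomial (Fin n) (ZMod q) :=
    fun i => Sum.elim (fun a => bind₁ ℓ (G a)) (fun b => zp b) (finSumFinEquiv.symm i) with huu
  set vv : Fin (r + t) → MvPolynomial (Fin n) (ZMod q) :=
    fun i => Sum.elim (fun a => bind₁ ℓ (H a)) (fun b => Rl b) (finSumFinEquiv.symm i) with hvv
  have hmain : ∃ s ≤ r + t, HasStrongDecomp d s f := by
    refine aux_rank_le d (r + t) f uu vv (bind₁ ℓ Q) ?_ ?_ ?_ ?_ ?_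
    · intro l
      rw [huu, hvv]
      rcases h : finSumFinEquiv.symm l with a | b
      · simp only [h, Sum.elim_inl, hpres]
        exact hGH a
      · simp only [h, Sum.elim_inr]
        have := hz1 b; have := hRldeg b
        omega
    · intro l
      rw [huu, hvv]
      rcases h : finSumFinEquiv.symm l with a | b
      · simp only [h, Sum.elim_inl, hpres]
        intro h0
        have := hG a
        omega
      · simp only [h, Sum.elim_inr]
        intro _
        exact hRldeg b
    · intro l
      rw [huu, hvv]
      rcases h : finSumFinEquiv.symm l with a | b
      · simp only [h, Sum.elim_inl, hpres]
        intro h0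
        have := hH a
        omega
      · simp only [h, Sum.elim_inr]
        intro _
        have := hz1 b
        omega
    · rw [hpres]
      exact hQ
    · have e6 : ∑ l, uu l * vv l
          = (∑ a : Fin r, bind₁ ℓ (G a) * bind₁ ℓ (H a)) + ∑ b : Fin t, zp b * Rl b := by
        rw [huu, hvv]
        rw [← Fintype.sum_equiv finSumFinEquiv
          (fun s => Sum.elim (fun a => bind₁ ℓ (G a)) (fun b => zp b) s
            * Sum.elim (fun a => bind₁ ℓ (H a)) (fun b => Rl b) s)
          (fun i => _) (fun s => by simp)]
        rw [Fintype.sum_sum_type]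
        simp
      rw [e6, hfsplit]
      have e7 : bind₁ ℓ g = (∑ a : Fin r, bind₁ ℓ (G a) * bind₁ ℓ (H a)) + bind₁ ℓ Q := by
        rw [hgeq, map_add, map_sum]
        simp only [map_mul]
      rw [e7]
      ring
  obtain ⟨s, hs, hsd⟩ := hmain
  calc strongRankD d f ≤ s := Nat.sInf_le hsd
    _ ≤ r + t := hs
    _ = strongRankD d g + (n - m) := by rw [hrdef, htdef, strongRankD]
end

section
/- If f: F^n → F is a degree-d polynomial and H ⊆ F^n is a hyperplane (affine subspace of dimension n - 1), then strong-rank(f) ≤ strong-rank(f|_H) + 1. -/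
open Finset MvPolynomial

/- ### Auxiliary lemmas -/

lemma my_aeval_deg_le {R : Type*} [CommRing R] {σ τ : Type*} (g : σ → MvPolynomial τ R)
    (hg : ∀ i, (g i).totalDegree ≤ 1) (P : MvPolynomial σ R) :
    (aeval g P).totalDegree ≤ P.totalDegree := by
  rw [aeval_def, eval₂_eq]
  refine (totalDegree_finset_sum _ _).trans (Finset.sup_le fun α hα => ?_)
  refine le_trans (totalDegree_mul _ _) ?_
  have h1 : (algebraMap R (MvPolynomial τ R) (P.coeff α)).totalDegree = 0 := totalDegree_C _
  rw [h1, zero_add]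
  refine le_trans (totalDegree_finset_prod _ _) ?_
  refine le_trans (Finset.sum_le_sum (fun i _ => (totalDegree_pow _ _).trans
    (Nat.mul_le_mul_left _ (hg i)))) ?_
  simp only [mul_one]
  exact le_trans (le_of_eq rfl) (le_totalDegree hα)

lemma my_X_dvd {R : Type*} [CommRing R] {m : ℕ} (P : MvPolynomial (Fin (m+1)) R) :
    X 0 ∣ P - rename Fin.succ (aeval (Fin.cases 0 X : Fin (m+1) → MvPolynomial (Fin m) R) P) := by
  induction P using MvPolynomial.induction_on with
  | C a => simp
  | add p q hp hq =>
      have : p + q - rename Fin.succ (aeval (Fin.cases 0 X : Fin (m+1) → MvPolynomial (Fin m) R) (p + q)) =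
          (p - rename Fin.succ (aeval (Fin.cases 0 X : Fin (m+1) → MvPolynomial (Fin m) R) p))
          + (q - rename Fin.succ (aeval (Fin.cases 0 X : Fin (m+1) → MvPolynomial (Fin m) R) q)) := by
        simp only [map_add]; ring
      rw [this]; exact dvd_add hp hq
  | mul_X p i hp =>
      rcases Fin.eq_zero_or_eq_succ i with rfl | ⟨j, rfl⟩
      · have : p * X 0 - rename Fin.succ (aeval (Fin.cases 0 X : Fin (m+1) → MvPolynomial (Fin m) R) (p * X 0)) = p * X 0 := by
          simp
        rw [this]; exact Dvd.intro_left p rfl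
      · have : p * X j.succ - rename Fin.succ (aeval (Fin.cases 0 X : Fin (m+1) → MvPolynomial (Fin m) R) (p * X j.succ)) =
            (p - rename Fin.succ (aeval (Fin.cases 0 X : Fin (m+1) → MvPolynomial (Fin m) R) p)) * X j.succ := by
          simp only [map_mul, aeval_X, Fin.cases_succ, rename_X]; ring
        rw [this]; exact Dvd.dvd.mul_right hp _

lemma exists_decomp {q k : ℕ} [Fact (Nat.Prime q)] {d : ℕ} (hd : 2 ≤ d)
    (P : MvPolynomial (Fin k) (ZMod q)) (hP : P.totalDegree ≤ d) :
    ∃ r, HasStrongDecomp d r P := by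
  classical
  set T : Finset ((Fin k) →₀ ℕ) := P.support.filter (fun α => (α.sum fun _ e => e) = d) with hT
  have hTmem : ∀ a ∈ T, a ∈ P.support ∧ (a.sum fun _ e => e) = d := by
    intro a ha; simpa [hT] using (Finset.mem_filter.mp ha)
  have hex : ∀ a : T, ∃ j, (a : (Fin k) →₀ ℕ) j ≠ 0 := by
    rintro ⟨a, ha⟩
    by_contra h
    push_neg at h
    have h0 : a = 0 := Finsupp.ext fun j => h j
    have h1 := (hTmem a ha).2
    rw [h0] at h1
    simp [Finsupp.sum_zero_index] at h1
    omega
  choose j hj using hex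
  set ε := T.equivFin.symm with hε
  have hcoeff : ∀ a : T, P.coeff a ≠ 0 := fun a => mem_support_iff.mp (hTmem _ a.2).1
  have hle : ∀ a : T, Finsupp.single (j a) 1 ≤ (a : (Fin k) →₀ ℕ) := fun a => by
    rw [Finsupp.single_le_iff]; exact Nat.one_le_iff_ne_zero.mpr (hj a)
  have hsplit : ∀ a : T, Finsupp.single (j a) 1 + ((a : (Fin k) →₀ ℕ) - Finsupp.single (j a) 1)
      = (a : (Fin k) →₀ ℕ) := fun a => add_tsub_cancel_of_le (hle a)
  have hsum : ∀ a : T, (((a : (Fin k) →₀ ℕ)) - Finsupp.single (j a) 1).sum (fun _ e => e)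
      = d - 1 := by
    intro a
    have h2 := congrArg (fun β : (Fin k) →₀ ℕ => β.sum fun _ e => e) (hsplit a)
    rw [Finsupp.sum_add_index' (fun _ => rfl) (fun _ _ _ => rfl),
      Finsupp.sum_single_index rfl] at h2
    have h3 := (hTmem _ a.2).2
    omega
  have hmul : ∀ a : T, X (j a) * monomial ((a : (Fin k) →₀ ℕ) - Finsupp.single (j a) 1)
      (P.coeff a) = monomial (a : (Fin k) →₀ ℕ) (P.coeff a) := by
    intro a
    rw [X, monomial_mul, one_mul, hsplit a]
  have hsumT : ∑ i : Fin T.card, monomial ((ε i : (Fin k) →₀ ℕ)) (P.coeff (ε i))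
      = ∑ α ∈ T, monomial α (P.coeff α) := by
    rw [← Finset.sum_coe_sort T (fun α => monomial α (P.coeff α))]
    exact Fintype.sum_equiv ε _ _ (fun i => rfl)
  refine ⟨T.card, fun i => X (j (ε i)), fun i =>
    monomial ((ε i : (Fin k) →₀ ℕ) - Finsupp.single (j (ε i)) 1) (P.coeff (ε i)),
    P - ∑ α ∈ T, monomial α (P.coeff α), ?_, ?_, ?_, ?_, ?_⟩
  · intro i; rw [totalDegree_X]; norm_num
  · intro i; rw [totalDegree_monomial _ (hcoeff (ε i)), hsum (ε i)]; omega
  · intro i; rw [totalDegree_X, totalDegree_monomial _ (hcoeff (ε i)), hsum (ε i)]; omega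
  · refine Finset.sup_le fun β hβ => ?_
    have hcQ : P.coeff β - (∑ α ∈ T, monomial α (P.coeff α)).coeff β ≠ 0 := by
      simpa [coeff_sub] using mem_support_iff.mp hβ
    have hcs : (∑ α ∈ T, monomial α (P.coeff α)).coeff β
        = if β ∈ T then P.coeff β else 0 := by
      rw [coeff_sum]
      simp only [coeff_monomial]
      rw [Finset.sum_ite_eq' T β (fun α => P.coeff α)]
    by_cases hβT : β ∈ T
    · rw [hcs, if_pos hβT] at hcQ; simp at hcQ
    · rw [hcs, if_neg hβT, sub_zero] at hcQ
      have h4 : (β.sum fun _ e => e) ≤ d := le_trans (le_totalDegree (mem_support_iff.mpr hcQ)) hP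
      have h5 : (β.sum fun _ e => e) ≠ d := by
        intro h; exact hβT (Finset.mem_filter.mpr ⟨mem_support_iff.mpr hcQ, h⟩)
      omega
  · rw [← hsumT]
    simp only [hmul]
    ring

lemma extend_matrix {q m : ℕ} [Fact (Nat.Prime q)] (M : Matrix (Fin (m+1)) (Fin m) (ZMod q))
    (hM : Function.Injective M.mulVec) :
    ∃ A B : Matrix (Fin (m+1)) (Fin (m+1)) (ZMod q),
      A * B = 1 ∧ B * A = 1 ∧ ∀ i j, A i (Fin.succ j) = M i j := by
  classical
  have hrange : LinearMap.range M.mulVecLin ≠ ⊤ := by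
    intro h
    have h1 : Module.finrank (ZMod q) (LinearMap.range M.mulVecLin) ≤ m := by
      simpa using (LinearMap.finrank_range_le M.mulVecLin)
    rw [h, finrank_top] at h1
    simp [Module.finrank_fin_fun] at h1
  have hvex : ∃ v, v ∉ LinearMap.range M.mulVecLin := by
    by_contra h
    push_neg at h
    exact hrange (Submodule.eq_top_iff'.mpr h)
  obtain ⟨v, hv⟩ := hvex
  set A : Matrix (Fin (m+1)) (Fin (m+1)) (ZMod q) :=
    Matrix.of fun i jj => Fin.cases (v i) (fun j => M i j) jj with hA
  have hAinj : Function.Injective A.mulVec := by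
    have hker : ∀ x, A.mulVec x = 0 → x = 0 := by
      intro x hx
      have hdec : ∀ i, v i * x 0 + ∑ j, M i j * x (Fin.succ j) = 0 := by
        intro i
        have := congrFun hx i
        simpa [Matrix.mulVec, dotProduct, hA, Fin.sum_univ_succ] using this
      have hvec : x 0 • v + M.mulVec (fun j => x (Fin.succ j)) = 0 := by
        funext i
        simpa [Matrix.mulVec, dotProduct, Pi.smul_apply, smul_eq_mul, mul_comm]
          using hdec i
      by_cases h0 : x 0 = 0
      · have hmv : M.mulVec (fun j => x (Fin.succ j)) = 0 := by
          rw [h0] at hvec; simpa using hvec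
        have hM0 : M.mulVec (0 : Fin m → ZMod q) = 0 := by simp
        have := hM (hmv.trans hM0.symm)
        funext i
        refine Fin.cases h0 (fun j => ?_) i
        exact congrFun this j
      · exfalso
        apply hv
        refine ⟨(-(x 0)⁻¹) • (fun j => x (Fin.succ j)), ?_⟩
        have : M.mulVec (fun j => x (Fin.succ j)) = -(x 0 • v) := by
          have h6 : (M.mulVec fun j => x (Fin.succ j)) + x 0 • v = 0 := by
            rw [add_comm (M.mulVec fun j => x (Fin.succ j)) (x 0 • v)]; exact hvec
          exact eq_neg_of_add_eq_zero_left h6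
        rw [Matrix.mulVecLin_apply, Matrix.mulVec_smul, this]
        rw [smul_neg, smul_smul]
        field_simp [h0]
        simp
    intro x y hxy
    have : A.mulVec (x - y) = 0 := by
      rw [Matrix.mulVec_sub, hxy, sub_self]
    have := hker _ this
    exact sub_eq_zero.mp this
  have hU : IsUnit A := Matrix.mulVec_injective_iff_isUnit.mp hAinj
  have hdet : IsUnit A.det := (Matrix.isUnit_iff_isUnit_det A).mp hU
  exact ⟨A, A⁻¹, Matrix.mul_nonsing_inv A hdet, Matrix.nonsing_inv_mul A hdet,
    fun i j => rfl⟩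

noncomputable def piH {q m : ℕ} [Fact (Nat.Prime q)] :
    MvPolynomial (Fin (m+1)) (ZMod q) →ₐ[ZMod q] MvPolynomial (Fin m) (ZMod q) :=
  aeval (Fin.cases 0 X)

noncomputable def sigA {q m : ℕ} [Fact (Nat.Prime q)]
    (A : Matrix (Fin (m+1)) (Fin (m+1)) (ZMod q)) (c : Fin (m+1) → ZMod q) :
    MvPolynomial (Fin (m+1)) (ZMod q) →ₐ[ZMod q] MvPolynomial (Fin (m+1)) (ZMod q) :=
  aeval (fun i => C (c i) + ∑ j, C (A i j) * X j)

noncomputable def tauB {q m : ℕ} [Fact (Nat.Prime q)]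
    (B : Matrix (Fin (m+1)) (Fin (m+1)) (ZMod q)) (c : Fin (m+1) → ZMod q) :
    MvPolynomial (Fin (m+1)) (ZMod q) →ₐ[ZMod q] MvPolynomial (Fin (m+1)) (ZMod q) :=
  aeval (fun i => ∑ j, C (B i j) * (X j - C (c j)))

lemma my_swap {q m : ℕ} [Fact (Nat.Prime q)] (A B : Matrix (Fin (m+1)) (Fin (m+1)) (ZMod q))
    (Y : Fin (m+1) → MvPolynomial (Fin (m+1)) (ZMod q)) (i : Fin (m+1)) :
    ∑ j, C (A i j) * (∑ k, C (B j k) * Y k) = ∑ k, C ((A*B) i k) * Y k := by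
  calc ∑ j, C (A i j) * ∑ k, C (B j k) * Y k
      = ∑ j, ∑ k, C (A i j * B j k) * Y k := by simp_rw [Finset.mul_sum, ← mul_assoc, ← C_mul]
    _ = ∑ k, ∑ j, C (A i j * B j k) * Y k := Finset.sum_comm
    _ = ∑ k, C ((A*B) i k) * Y k := by
        refine Finset.sum_congr rfl fun k _ => ?_
        rw [← Finset.sum_mul, ← map_sum, Matrix.mul_apply]

lemma my_one_sum {q m : ℕ} [Fact (Nat.Prime q)]
    (Y : Fin (m+1) → MvPolynomial (Fin (m+1)) (ZMod q)) (i : Fin (m+1)) :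
    ∑ k, C ((1 : Matrix (Fin (m+1)) (Fin (m+1)) (ZMod q)) i k) * Y k = Y i := by
  simp [Matrix.one_apply, apply_ite C, ite_mul, Finset.sum_ite_eq]

lemma tau_sig {q m : ℕ} [Fact (Nat.Prime q)] (A B : Matrix (Fin (m+1)) (Fin (m+1)) (ZMod q))
    (c : Fin (m+1) → ZMod q) (hAB : A * B = 1) (P : MvPolynomial (Fin (m+1)) (ZMod q)) :
    tauB B c (sigA A c P) = P := by
  have h : (tauB B c).comp (sigA A c) = AlgHom.id (ZMod q) _ := by
    apply algHom_ext
    intro i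
    simp only [AlgHom.comp_apply, AlgHom.id_apply, sigA, tauB, aeval_X, map_add, aeval_C,
      map_sum, map_mul]
    simp only [algebraMap_eq]
    rw [my_swap A B _ i, hAB, my_one_sum]
    ring
  exact AlgHom.congr_fun h P

lemma sig_tau {q m : ℕ} [Fact (Nat.Prime q)] (A B : Matrix (Fin (m+1)) (Fin (m+1)) (ZMod q))
    (c : Fin (m+1) → ZMod q) (hBA : B * A = 1) (P : MvPolynomial (Fin (m+1)) (ZMod q)) :
    sigA A c (tauB B c P) = P := by
  have h : (sigA A c).comp (tauB B c) = AlgHom.id (ZMod q) _ := by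
    apply algHom_ext
    intro i
    simp only [AlgHom.comp_apply, AlgHom.id_apply, sigA, tauB, aeval_X, map_add, aeval_C,
      map_sum, map_mul, map_sub]
    simp only [algebraMap_eq]
    have hsimp : ∀ j : Fin (m+1), (C (c j) + ∑ k, C (A j k) * X k) - C (c j)
        = ∑ k, C (A j k) * X k := fun j => by ring
    simp_rw [hsimp]
    rw [my_swap B A _ i, hBA, my_one_sum]
  exact AlgHom.congr_fun h P

lemma pi_rename {q m : ℕ} [Fact (Nat.Prime q)] (P : MvPolynomial (Fin m) (ZMod q)) :
    piH (rename Fin.succ P) = P := by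
  have h : (piH (q := q) (m := m)).comp (rename Fin.succ) = AlgHom.id (ZMod q) _ := by
    apply algHom_ext
    intro i
    simp [piH]
  exact AlgHom.congr_fun h P

lemma pi_sig {q m : ℕ} [Fact (Nat.Prime q)] (A : Matrix (Fin (m+1)) (Fin (m+1)) (ZMod q))
    (M : Matrix (Fin (m+1)) (Fin m) (ZMod q)) (c : Fin (m+1) → ZMod q)
    (hAM : ∀ i j, A i (Fin.succ j) = M i j) (f : MvPolynomial (Fin (m+1)) (ZMod q)) :
    piH (sigA A c f) = bind₁ (fun i => C (c i) + ∑ j, C (M i j) * X j) f := by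
  have h : (piH (q := q) (m := m)).comp (sigA A c)
      = bind₁ (fun i => C (c i) + ∑ j, C (M i j) * X j) := by
    apply algHom_ext
    intro i
    simp only [AlgHom.comp_apply, sigA, piH, aeval_X, map_add, aeval_C, map_sum, map_mul,
      bind₁_X_right, algebraMap_eq]
    congr 1
    rw [Fin.sum_univ_succ]
    simp [hAM]
  exact AlgHom.congr_fun h f

/-- If `H` is a hyperplane (affine subspace of dimension `n-1`), parametrized by an
injective affine map `u ↦ c + M u` from `F^{n-1}`, then
`strong-rank(f) ≤ strong-rank(f|_H) + 1`. -/
theorem stmt6 {q n : ℕ} [Fact (Nat.Prime q)] (hn : 1 ≤ n) (d : ℕ)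
    (f : MvPolynomial (Fin n) (ZMod q)) (hdeg : f.totalDegree ≤ d)
    (M : Matrix (Fin n) (Fin (n - 1)) (ZMod q)) (c : Fin n → ZMod q)
    (hinj : Function.Injective fun (u : Fin (n - 1) → ZMod q) =>
      fun i : Fin n => c i + ∑ j, M i j * u j) :
    strongRankD d f ≤
      strongRankD d (MvPolynomial.bind₁
        (fun i => MvPolynomial.C (c i) + ∑ j, MvPolynomial.C (M i j) * MvPolynomial.X j) f)
      + 1 := by
  classical
  obtain ⟨m, rfl⟩ : ∃ m, n = m + 1 := ⟨n - 1, (Nat.succ_pred_eq_of_pos hn).symm⟩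
  by_cases hd : 2 ≤ d
  swap
  · -- small degree case
    by_cases hf : f.totalDegree ≤ d - 1
    · have h0 : HasStrongDecomp d 0 f :=
        ⟨Fin.elim0, Fin.elim0, f, fun i => i.elim0, fun i => i.elim0, fun i => i.elim0, hf,
          by simp⟩
      exact le_trans (Nat.sInf_le h0) (Nat.zero_le _)
    · have hempty : {r | HasStrongDecomp d r f} = ∅ := by
        ext r
        simp only [Set.mem_setOf_eq, Set.mem_empty_iff_false, iff_false]
        rintro ⟨G, H, Q, hG, hH, hGH, hQ, hsum⟩
        rcases Nat.eq_zero_or_pos r with rfl | hr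
        · apply hf
          rw [hsum]
          simpa using hQ
        · have h1 := hG ⟨0, hr⟩
          have h2 := hH ⟨0, hr⟩
          have h3 := hGH ⟨0, hr⟩
          omega
      show sInf {r | HasStrongDecomp d r f} ≤ _
      rw [hempty, Nat.sInf_empty]
      exact Nat.zero_le _
  · -- main case
    have hMinj : Function.Injective (Matrix.mulVec M) := by
      intro u u' huu
      apply hinj
      funext i
      simp only
      congr 1
      have h1 := congrFun huu i
      simpa [Matrix.mulVec, dotProduct] using h1
    obtain ⟨A, B, hAB, hBA, hAM⟩ := extend_matrix M hMinj
    set w : Fin (m+1) → MvPolynomial (Fin m) (ZMod q) :=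
      fun i => C (c i) + ∑ j, C (M i j) * X j with hw
    -- degree bounds for the substitutions
    have hw1 : ∀ i, (w i).totalDegree ≤ 1 := by
      intro i
      refine le_trans (totalDegree_add _ _) (max_le (by simp) ?_)
      refine le_trans (totalDegree_finset_sum _ _) (Finset.sup_le fun j _ => ?_)
      exact le_trans (totalDegree_mul _ _) (by simp [totalDegree_X])
    have hσ1 : ∀ i : Fin (m+1),
        ((C (c i) + ∑ j, C (A i j) * X j : MvPolynomial (Fin (m+1)) (ZMod q))).totalDegree ≤ 1 := by
      intro i
      refine le_trans (totalDegree_add _ _) (max_le (by simp) ?_)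
      refine le_trans (totalDegree_finset_sum _ _) (Finset.sup_le fun j _ => ?_)
      exact le_trans (totalDegree_mul _ _) (by simp [totalDegree_X])
    have hτ1 : ∀ i : Fin (m+1),
        ((∑ j, C (B i j) * (X j - C (c j)) : MvPolynomial (Fin (m+1)) (ZMod q))).totalDegree ≤ 1 := by
      intro i
      refine le_trans (totalDegree_finset_sum _ _) (Finset.sup_le fun j _ => ?_)
      refine le_trans (totalDegree_mul _ _) ?_
      have hXC : (X j - C (c j) : MvPolynomial (Fin (m+1)) (ZMod q))
          = X j + C (-(c j)) := by rw [map_neg, sub_eq_add_neg]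
      have h2 : (X j - C (c j) : MvPolynomial (Fin (m+1)) (ZMod q)).totalDegree ≤ 1 := by
        rw [hXC]
        exact le_trans (totalDegree_add _ _) (max_le (le_of_eq (totalDegree_X j)) (by simp))
      simpa using h2
    have hπ1 : ∀ i : Fin (m+1),
        ((Fin.cases 0 X : Fin (m+1) → MvPolynomial (Fin m) (ZMod q)) i).totalDegree ≤ 1 := by
      intro i
      refine Fin.cases ?_ (fun j => ?_) i
      · simp
      · simp [totalDegree_X]
    have hσle : ∀ P, (sigA A c P).totalDegree ≤ P.totalDegree :=
      fun P => my_aeval_deg_le _ hσ1 P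
    have hτle : ∀ P, (tauB B c P).totalDegree ≤ P.totalDegree :=
      fun P => my_aeval_deg_le _ hτ1 P
    have hπle : ∀ P, (piH (q := q) (m := m) P).totalDegree ≤ P.totalDegree :=
      fun P => my_aeval_deg_le _ hπ1 P
    have hσdeg : ∀ P, (sigA A c P).totalDegree = P.totalDegree := by
      intro P
      refine le_antisymm (hσle P) ?_
      calc P.totalDegree = (tauB B c (sigA A c P)).totalDegree := by rw [tau_sig A B c hAB]
        _ ≤ (sigA A c P).totalDegree := hτle _
    have hτρdeg : ∀ P : MvPolynomial (Fin m) (ZMod q),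
        (tauB B c (rename Fin.succ P)).totalDegree = P.totalDegree := by
      intro P
      refine le_antisymm (le_trans (hτle _) (totalDegree_rename_le _ _)) ?_
      calc P.totalDegree = (piH (sigA A c (tauB B c (rename Fin.succ P)))).totalDegree := by
            rw [sig_tau A B c hBA, pi_rename]
        _ ≤ (sigA A c (tauB B c (rename Fin.succ P))).totalDegree := hπle _
        _ = (tauB B c (rename Fin.succ P)).totalDegree := hσdeg _
    -- the restricted polynomial and its decomposition
    have hfres_deg : (bind₁ w f).totalDegree ≤ d := le_trans (my_aeval_deg_le w hw1 f) hdeg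
    have hSne : {r | HasStrongDecomp d r (bind₁ w f)}.Nonempty := exists_decomp hd _ hfres_deg
    have hmem : HasStrongDecomp d (sInf {r | HasStrongDecomp d r (bind₁ w f)}) (bind₁ w f) :=
      Nat.sInf_mem hSne
    set r₀ := sInf {r | HasStrongDecomp d r (bind₁ w f)} with hr₀
    obtain ⟨G, H, Q, hG, hH, hGH, hQd, hsum⟩ := hmem
    -- divide off X 0
    obtain ⟨R, hR⟩ := my_X_dvd (sigA A c f)
    have hRg : sigA A c f = rename Fin.succ (bind₁ w f) + X 0 * R := by
      have h1 : piH (sigA A c f) = bind₁ w f := pi_sig A M c hAM f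
      have h2 : sigA A c f - rename Fin.succ (piH (sigA A c f)) = X 0 * R := hR
      rw [h1] at h2
      exact sub_eq_iff_eq_add'.mp h2
    have hXR : (X (0 : Fin (m+1)) * R).totalDegree ≤ d := by
      have h3 : X (0 : Fin (m+1)) * R = sigA A c f - rename Fin.succ (bind₁ w f) := by
        rw [hRg]; ring
      rw [h3, sub_eq_add_neg]
      refine le_trans (totalDegree_add _ _) (max_le ?_ ?_)
      · rw [hσdeg]; exact hdeg
      · rw [totalDegree_neg]
        exact le_trans (totalDegree_rename_le _ _) hfres_deg
    have hRd : R.totalDegree ≤ d - 1 := by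
      by_cases hR0 : R = 0
      · simp [hR0]
      · obtain ⟨α, hαs, hα⟩ := Finset.exists_mem_eq_sup R.support
          (support_nonempty.mpr hR0) (fun s => s.sum fun _ e => e)
        have hmem2 : (Finsupp.single (0 : Fin (m+1)) 1 + α) ∈ (X (0 : Fin (m+1)) * R).support :=
          mem_support_iff.mpr (by rw [coeff_X_mul]; exact mem_support_iff.mp hαs)
        have h7 := le_trans (le_totalDegree hmem2) hXR
        have h8 : ((Finsupp.single (0 : Fin (m+1)) 1 + α).sum fun _ e => e)
            = 1 + (α.sum fun _ e => e) := by
          rw [Finsupp.sum_add_index' (fun _ => rfl) (fun _ _ _ => rfl),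
            Finsupp.sum_single_index rfl]
        rw [h8] at h7
        have h9 : R.totalDegree = α.sum fun _ e => e := hα
        omega
    -- transported data
    set L := tauB B c (X 0) with hLdef
    set R' := tauB B c R with hR'def
    set G' : Fin r₀ → MvPolynomial (Fin (m+1)) (ZMod q) :=
      fun i => tauB B c (rename Fin.succ (G i)) with hG'def
    set H' : Fin r₀ → MvPolynomial (Fin (m+1)) (ZMod q) :=
      fun i => tauB B c (rename Fin.succ (H i)) with hH'def
    set Q' := tauB B c (rename Fin.succ Q) with hQ'def
    have hLdeg : L.totalDegree = 1 := by
      have h1 : sigA A c L = X 0 := sig_tau A B c hBA (X 0)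
      have h2 := hσdeg L
      rw [h1] at h2
      rw [← h2, totalDegree_X]
    have hfdec : f = ∑ i, G' i * H' i + (L * R' + Q') := by
      have h1 : f = tauB B c (sigA A c f) := (tau_sig A B c hAB f).symm
      rw [hRg, hsum] at h1
      rw [h1]
      simp only [map_add, map_mul, map_sum]
      ring
    have hR'd : R'.totalDegree ≤ d - 1 := le_trans (hτle R) hRd
    have hQ'd : Q'.totalDegree ≤ d - 1 := by
      rw [hQ'def, hτρdeg]; exact hQd
    by_cases hR'0 : 0 < R'.totalDegree
    · have hdec : HasStrongDecomp d (r₀ + 1) f := by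
        refine ⟨Fin.cons L G', Fin.cons R' H', Q', ?_, ?_, ?_, hQ'd, ?_⟩
        · intro i
          refine Fin.cases ?_ (fun j => ?_) i
          · simp [Fin.cons_zero, hLdeg]
          · simp only [Fin.cons_succ, hG'def]
            rw [hτρdeg]
            exact hG j
        · intro i
          refine Fin.cases ?_ (fun j => ?_) i
          · simpa [Fin.cons_zero] using hR'0
          · simp only [Fin.cons_succ, hH'def]
            rw [hτρdeg]
            exact hH j
        · intro i
          refine Fin.cases ?_ (fun j => ?_) i
          · simp only [Fin.cons_zero, Fin.cons_succ]
            rw [hLdeg]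
            omega
          · simp only [Fin.cons_succ, hG'def, hH'def]
            rw [hτρdeg, hτρdeg]
            exact hGH j
        · rw [Fin.sum_univ_succ]
          simp only [Fin.cons_zero, Fin.cons_succ]
          rw [hfdec]
          ring
      exact le_trans (Nat.sInf_le hdec) (le_refl _)
    · have hR'0' : R'.totalDegree = 0 := by omega
      have hdec : HasStrongDecomp d r₀ f := by
        refine ⟨G', H', L * R' + Q', ?_, ?_, ?_, ?_, hfdec⟩
        · intro i; rw [hG'def]; simp only; rw [hτρdeg]; exact hG i
        · intro i; rw [hH'def]; simp only; rw [hτρdeg]; exact hH i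
        · intro i
          simp only [hG'def, hH'def]
          rw [hτρdeg, hτρdeg]
          exact hGH i
        · refine le_trans (totalDegree_add _ _) (max_le ?_ hQ'd)
          refine le_trans (totalDegree_mul _ _) ?_
          rw [hLdeg, hR'0']
          omega
      exact le_trans (Nat.sInf_le hdec) (Nat.le_succ _)
end

section
/- If every degree-5 polynomial f: F^n → F with bias at least δ is constant on some affine subspace of dimension c(δ)·n, then any degree-5 polynomial affine disperser for dimension k is also an affine extractor for dimension O(k). -/
open Finset

open scoped Classical in
/-- The bias of `g` restricted to the coset `V + h`. -/
noncomputable def cosetBias {q n : ℕ} [NeZero q] (V : Submodule (ZMod q) (Fin n → ZMod q))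
    (h : Fin n → ZMod q) (g : (Fin n → ZMod q) → ZMod q) : ℝ :=
  ‖∑ v : V,
    Complex.exp (2 * Real.pi * Complex.I * ((g ((v : Fin n → ZMod q) + h)).val : ℂ) / (q : ℂ))‖
    / (Fintype.card V : ℝ)

lemma eval_bind₁' {R : Type*} [CommSemiring R] {n m : ℕ} (p : Fin n → MvPolynomial (Fin m) R)
    (f : MvPolynomial (Fin n) R) (x : Fin m → R) :
    MvPolynomial.eval x (MvPolynomial.bind₁ p f)
      = MvPolynomial.eval (fun i => MvPolynomial.eval x (p i)) f := by
  have hx : MvPolynomial.eval x = MvPolynomial.eval₂Hom (RingHom.id R) x := rfl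
  rw [hx, MvPolynomial.eval₂Hom_bind₁]; rfl

lemma totalDegree_bind₁_le' {R : Type*} [CommSemiring R] {n m : ℕ}
    (p : Fin n → MvPolynomial (Fin m) R) (hp : ∀ i, (p i).totalDegree ≤ 1)
    (f : MvPolynomial (Fin n) R) :
    (MvPolynomial.bind₁ p f).totalDegree ≤ f.totalDegree := by
  conv_lhs => rw [f.as_sum]
  rw [map_sum]
  refine le_trans (MvPolynomial.totalDegree_finset_sum _ _) (Finset.sup_le fun d hd => ?_)
  rw [MvPolynomial.bind₁_monomial]
  calc (MvPolynomial.C (f.coeff d) * ∏ i ∈ d.support, p i ^ d i).totalDegree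
      ≤ (MvPolynomial.C (f.coeff d)).totalDegree
        + (∏ i ∈ d.support, p i ^ d i).totalDegree := MvPolynomial.totalDegree_mul _ _
    _ ≤ 0 + ∑ i ∈ d.support, (p i ^ d i).totalDegree := by
        gcongr
        · exact le_of_eq (MvPolynomial.totalDegree_C _)
        · exact MvPolynomial.totalDegree_finset_prod _ _
    _ ≤ ∑ i ∈ d.support, d i * 1 := by
        rw [zero_add]
        refine Finset.sum_le_sum fun i _ => ?_
        exact le_trans (MvPolynomial.totalDegree_pow _ _) (by gcongr; exact hp i)
    _ = ∑ i ∈ d.support, d i := by simp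
    _ ≤ f.totalDegree := MvPolynomial.le_totalDegree hd

/-- If every degree-5 polynomial with bias at least `δ` is constant on an affine
subspace of dimension `c(δ)·n`, then every degree-5 affine disperser for dimension `k`
is an affine extractor for dimension `O(k)`: all nontrivial characters of `f` have
bias at most `ε` on every affine subspace of dimension `≥ C·k`. -/
theorem stmt13 {q : ℕ} [Fact (Nat.Prime q)] (ε : ℝ) (hε : 0 < ε)
    (Hyp : ∀ δ : ℝ, 0 < δ → ∃ c : ℝ, 0 < c ∧
      ∀ (n : ℕ) (f : MvPolynomial (Fin n) (ZMod q)),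
        f.totalDegree ≤ 5 →
        δ ≤ bias (fun x => MvPolynomial.eval x f) →
        ∃ (V : Submodule (ZMod q) (Fin n → ZMod q)) (h : Fin n → ZMod q) (cst : ZMod q),
          c * n ≤ (Module.finrank (ZMod q) V : ℝ) ∧
          ∀ v ∈ V, MvPolynomial.eval (v + h) f = cst) :
    ∃ C : ℝ, 0 < C ∧
      ∀ (n k : ℕ) (f : MvPolynomial (Fin n) (ZMod q)),
        f.totalDegree ≤ 5 →
        -- `f` is an affine disperser for dimension `k`
        (∀ (V : Submodule (ZMod q) (Fin n → ZMod q)) (h : Fin n → ZMod q),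
          (k : ℝ) ≤ (Module.finrank (ZMod q) V : ℝ) →
          ¬ ∃ cst : ZMod q, ∀ v ∈ V, MvPolynomial.eval (v + h) f = cst) →
        -- then `f` is an affine extractor for dimension `C·k` with error `ε`
        ∀ (V : Submodule (ZMod q) (Fin n → ZMod q)) (h : Fin n → ZMod q),
          C * (k : ℝ) ≤ (Module.finrank (ZMod q) V : ℝ) →
          ∀ lam : ZMod q, lam ≠ 0 →
            cosetBias V h (fun x => lam * MvPolynomial.eval x f) ≤ ε := by
  classical
  obtain ⟨c, hc, Hc⟩ := Hyp ε hε
  refine ⟨max 1 (1/c), lt_of_lt_of_le one_pos (le_max_left _ _), ?_⟩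
  intro n k f hdeg hdisp V h hdim lam hlam
  by_contra hbig
  push_neg at hbig
  set m := Module.finrank (ZMod q) V with hm
  let B : Module.Basis (Fin m) (ZMod q) V := Module.finBasis (ZMod q) V
  let L : (Fin m → ZMod q) →ₗ[ZMod q] (Fin n → ZMod q) :=
    V.subtype ∘ₗ B.equivFun.symm.toLinearMap
  have hL : Function.Injective L := V.injective_subtype.comp B.equivFun.symm.injective
  -- the affine substitution polynomials
  let p : Fin n → MvPolynomial (Fin m) (ZMod q) := fun i =>
    (∑ j : Fin m, MvPolynomial.C ((L (Pi.single j 1)) i) * MvPolynomial.X j)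
      + MvPolynomial.C (h i)
  have hpdeg : ∀ i, (p i).totalDegree ≤ 1 := by
    intro i
    refine le_trans (MvPolynomial.totalDegree_add _ _) (max_le ?_ (by simp))
    refine le_trans (MvPolynomial.totalDegree_finset_sum _ _) (Finset.sup_le fun j _ => ?_)
    refine le_trans (MvPolynomial.totalDegree_mul _ _) ?_
    simp [MvPolynomial.totalDegree_X]
  have hLx : ∀ (x : Fin m → ZMod q) (i : Fin n),
      L x i = ∑ j : Fin m, (L (Pi.single j 1)) i * x j := by
    intro x i
    have hx : x = ∑ j : Fin m, x j • (Pi.single j 1 : Fin m → ZMod q) := by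
      conv_lhs => rw [pi_eq_sum_univ x]
      refine Finset.sum_congr rfl fun j _ => ?_
      congr 1
      funext j1
      simp [Pi.single_apply, eq_comm]
    conv_lhs => rw [hx, map_sum]
    rw [Finset.sum_apply]
    refine Finset.sum_congr rfl fun j _ => ?_
    rw [map_smul]
    simp [mul_comm]
  have hpev : ∀ (x : Fin m → ZMod q) (i : Fin n),
      MvPolynomial.eval x (p i) = (L x + h) i := by
    intro x i
    simp only [p, map_add, map_sum, map_mul, MvPolynomial.eval_C, MvPolynomial.eval_X,
      Pi.add_apply]
    rw [hLx x i]
  let f' : MvPolynomial (Fin m) (ZMod q) :=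
    MvPolynomial.C lam * MvPolynomial.bind₁ p f
  have hdeg' : f'.totalDegree ≤ 5 := by
    refine le_trans (MvPolynomial.totalDegree_mul _ _) ?_
    simp only [MvPolynomial.totalDegree_C, zero_add]
    exact le_trans (totalDegree_bind₁_le' p hpdeg f) hdeg
  have heval' : ∀ x : Fin m → ZMod q,
      MvPolynomial.eval x f' = lam * MvPolynomial.eval (L x + h) f := by
    intro x
    have hfun : (fun i => MvPolynomial.eval x (p i)) = L x + h := funext (hpev x)
    simp only [f', map_mul, MvPolynomial.eval_C, eval_bind₁', hfun]
  -- bias = cosetBias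
  have hcard : (Fintype.card V : ℝ) = (q : ℝ) ^ m := by
    rw [show Fintype.card V = Fintype.card (ZMod q) ^ m from Module.card_eq_pow_finrank, ZMod.card]
    push_cast; ring
  have hsum : ∑ v : V, Complex.exp (2 * Real.pi * Complex.I *
        (((lam * MvPolynomial.eval ((v : Fin n → ZMod q) + h) f).val : ℕ) : ℂ) / (q : ℂ))
      = ∑ x : Fin m → ZMod q, Complex.exp (2 * Real.pi * Complex.I *
        (((MvPolynomial.eval x f').val : ℕ) : ℂ) / (q : ℂ)) := by
    rw [← Equiv.sum_comp B.equivFun.symm.toEquiv]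
    refine Finset.sum_congr rfl fun x _ => ?_
    have : ((B.equivFun.symm.toEquiv x : V) : Fin n → ZMod q) = L x := rfl
    rw [this, heval' x]
  have hbias : bias (fun x => MvPolynomial.eval x f')
      = cosetBias V h (fun x => lam * MvPolynomial.eval x f) := by
    rw [bias, cosetBias, hcard, ← hsum]
  have hεb : ε ≤ bias (fun x => MvPolynomial.eval x f') := by
    rw [hbias]; exact hbig.le
  obtain ⟨W, h', cst, hW1, hW2⟩ := Hc m f' hdeg' hεb
  -- push forward the constant subspace
  refine hdisp (W.map L) (L h' + h) ?_ ⟨lam⁻¹ * cst, ?_⟩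
  · have hfr : Module.finrank (ZMod q) W = Module.finrank (ZMod q) (W.map L) :=
      (Submodule.equivMapOfInjective L hL W).finrank_eq
    rw [← hfr]
    have hk1 : (1/c) * (k : ℝ) ≤ (m : ℝ) :=
      le_trans (mul_le_mul_of_nonneg_right (le_max_right 1 (1/c)) (Nat.cast_nonneg k)) hdim
    have hkm : (k : ℝ) ≤ c * m := by
      have := mul_le_mul_of_nonneg_left hk1 hc.le
      calc (k : ℝ) = c * ((1/c) * k) := by field_simp
        _ ≤ c * m := this
    exact le_trans hkm hW1
  · intro v hv
    obtain ⟨w, hw, rfl⟩ := Submodule.mem_map.mp hv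
    have hval := hW2 w hw
    rw [heval' (w + h')] at hval
    have harg : L (w + h') + h = L w + (L h' + h) := by
      rw [map_add, add_assoc]
    rw [harg] at hval
    rw [← hval, inv_mul_cancel_left₀ hlam]
end
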